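/- Let ⊗ : [0,1] × [0,1] → [0,1] be a continuous function satisfying 1 ⊗ 1 = 1, 0 ⊗ 1 = 0, and 1 ⊗ 0 = 0. Then for all real numbers t and u, and for all sequences (ε_n) of positive reals with ε_n → 0 and (B_n) of reals with B_n·ε_n → +∞, the sequence (1/(1 + e^{−B_n(t−u+ε_n)})) ⊗ (1/(1 + e^{B_n(t−u−ε_n)})) converges to 1 if t = u, and converges to 0 if t ≠ u. -/

import Mathlib

open Filter Topology

private lemma sig_mem (x : ℝ) : 1/(1+Real.exp x) ∈ Set.Icc (0:ℝ) 1 := by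
  have h := Real.exp_pos x
  constructor
  · positivity
  · rw [div_le_one (by linarith)]; linarith

private lemma sig_one {a : ℕ → ℝ} (h : Tendsto a atTop atBot) :
    Tendsto (fun n => 1/(1+Real.exp (a n))) atTop (𝓝 1) := by
  have he : Tendsto (fun n => Real.exp (a n)) atTop (𝓝 0) :=
    Real.tendsto_exp_atBot.comp h
  have : Tendsto (fun n => 1/(1+Real.exp (a n))) atTop (𝓝 (1/(1+0))) :=
    tendsto_const_nhds.div (tendsto_const_nhds.add he) (by norm_num)
  simpa using this

private lemma sig_zero {a : ℕ → ℝ} (h : Tendsto a atTop atTop) :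
    Tendsto (fun n => 1/(1+Real.exp (a n))) atTop (𝓝 0) := by
  have h2 : Tendsto (fun n => 1+Real.exp (a n)) atTop atTop :=
    tendsto_atTop_add_const_left _ _ (Real.tendsto_exp_atTop.comp h)
  simpa [one_div, Function.comp_def] using tendsto_inv_atTop_zero.comp h2

private lemma comp_lim (otimes : ℝ → ℝ → ℝ)
    (hcont : ContinuousOn (fun p : ℝ × ℝ => otimes p.1 p.2)
      (Set.Icc (0:ℝ) 1 ×ˢ Set.Icc (0:ℝ) 1))
    {f g : ℕ → ℝ} {x y : ℝ}
    (hx : x ∈ Set.Icc (0:ℝ) 1) (hy : y ∈ Set.Icc (0:ℝ) 1)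
    (hfm : ∀ n, f n ∈ Set.Icc (0:ℝ) 1) (hgm : ∀ n, g n ∈ Set.Icc (0:ℝ) 1)
    (hf : Tendsto f atTop (𝓝 x)) (hg : Tendsto g atTop (𝓝 y)) :
    Tendsto (fun n => otimes (f n) (g n)) atTop (𝓝 (otimes x y)) := by
  have hc := hcont (x, y) ⟨hx, hy⟩
  have hp : Tendsto (fun n => (f n, g n)) atTop
      (𝓝[Set.Icc (0:ℝ) 1 ×ˢ Set.Icc (0:ℝ) 1] (x, y)) :=
    tendsto_nhdsWithin_of_tendsto_nhds_of_eventually_within _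
      (hf.prodMk_nhds hg) (Filter.Eventually.of_forall fun n => ⟨hfm n, hgm n⟩)
  exact hc.tendsto.comp hp

theorem stmt_3 (otimes : ℝ → ℝ → ℝ)
    (hmaps : ∀ x ∈ Set.Icc (0:ℝ) 1, ∀ y ∈ Set.Icc (0:ℝ) 1, otimes x y ∈ Set.Icc (0:ℝ) 1)
    (hcont : ContinuousOn (fun p : ℝ × ℝ => otimes p.1 p.2)
      (Set.Icc (0:ℝ) 1 ×ˢ Set.Icc (0:ℝ) 1))
    (h11 : otimes 1 1 = 1) (h01 : otimes 0 1 = 0) (h10 : otimes 1 0 = 0)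
    (t u : ℝ) (ε B : ℕ → ℝ)
    (hε_pos : ∀ n, 0 < ε n)
    (hε_lim : Tendsto ε atTop (𝓝 0))
    (hBε : Tendsto (fun n => B n * ε n) atTop atTop) :
    (t = u → Tendsto (fun n => otimes (1 / (1 + Real.exp (-(B n) * (t - u + ε n))))
      (1 / (1 + Real.exp (B n * (t - u - ε n))))) atTop (𝓝 1)) ∧
    (t ≠ u → Tendsto (fun n => otimes (1 / (1 + Real.exp (-(B n) * (t - u + ε n))))
      (1 / (1 + Real.exp (B n * (t - u - ε n))))) atTop (𝓝 0)) := by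
  have hfm : ∀ n, 1 / (1 + Real.exp (-(B n) * (t - u + ε n))) ∈ Set.Icc (0:ℝ) 1 :=
    fun n => sig_mem _
  have hgm : ∀ n, 1 / (1 + Real.exp (B n * (t - u - ε n))) ∈ Set.Icc (0:ℝ) 1 :=
    fun n => sig_mem _
  have h0 : (0:ℝ) ∈ Set.Icc (0:ℝ) 1 := by norm_num
  have h1 : (1:ℝ) ∈ Set.Icc (0:ℝ) 1 := by norm_num
  -- B tends to atTop
  have hBpos : ∀ᶠ n in atTop, (1:ℝ) ≤ B n * ε n := hBε.eventually_ge_atTop 1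
  have hεsmall : ∀ᶠ n in atTop, ε n ≤ 1 := by
    have := hε_lim.eventually (eventually_le_nhds (show (0:ℝ) < 1 by norm_num))
    filter_upwards [this] with n h using h
  have hB : Tendsto B atTop atTop := by
    apply tendsto_atTop_mono' atTop _ hBε
    filter_upwards [hBpos, hεsmall] with n h1' h2'
    have hε := hε_pos n
    have hBn : 0 < B n := by nlinarith
    nlinarith
  constructor
  · intro heq
    subst heq
    have hf : Tendsto (fun n => 1 / (1 + Real.exp (-(B n) * (t - t + ε n)))) atTop (𝓝 1) := by
      apply sig_one
      have : Tendsto (fun n => -(B n * ε n)) atTop atBot := tendsto_neg_atBot_iff.mpr hBε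
      exact this.congr (by intro n; ring)
    have hg : Tendsto (fun n => 1 / (1 + Real.exp (B n * (t - t - ε n)))) atTop (𝓝 1) := by
      apply sig_one
      have : Tendsto (fun n => -(B n * ε n)) atTop atBot := tendsto_neg_atBot_iff.mpr hBε
      exact this.congr (by intro n; ring)
    have := comp_lim otimes hcont h1 h1 hfm hgm hf hg
    rwa [h11] at this
  · intro hne
    rcases lt_or_gt_of_ne hne with hlt | hgt
    · -- t < u : f → 0, g → 1
      set d := u - t with hd
      have hdpos : 0 < d := by simp [hd]; linarith
      have hεd : ∀ᶠ n in atTop, ε n ≤ d / 2 := by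
        have := hε_lim.eventually (eventually_le_nhds (by linarith : (0:ℝ) < d / 2))
        filter_upwards [this] with n h using h
      have hBd : Tendsto (fun n => B n * (d / 2)) atTop atTop :=
        hB.atTop_mul_const (by linarith)
      have hf : Tendsto (fun n => 1 / (1 + Real.exp (-(B n) * (t - u + ε n)))) atTop (𝓝 0) := by
        apply sig_zero
        apply tendsto_atTop_mono' atTop _ hBd
        filter_upwards [hεd, hB.eventually_ge_atTop 0] with n h1' h2'
        have : -(B n) * (t - u + ε n) = B n * (d - ε n) := by simp [hd]; ring
        rw [this]
        have := hε_pos n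
        nlinarith
      have hg : Tendsto (fun n => 1 / (1 + Real.exp (B n * (t - u - ε n)))) atTop (𝓝 1) := by
        apply sig_one
        have hBd' : Tendsto (fun n => -(B n * (d / 2))) atTop atBot :=
          tendsto_neg_atBot_iff.mpr hBd
        apply tendsto_atBot_mono' atTop _ hBd'
        filter_upwards [hB.eventually_ge_atTop 0] with n h2'
        have := hε_pos n
        nlinarith [hε_pos n]
      have := comp_lim otimes hcont h0 h1 hfm hgm hf hg
      rwa [h01] at this
    · -- t > u : f → 1, g → 0
      set d := t - u with hd
      have hdpos : 0 < d := by simp [hd]; linarith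
      have hεd : ∀ᶠ n in atTop, ε n ≤ d / 2 := by
        have := hε_lim.eventually (eventually_le_nhds (by linarith : (0:ℝ) < d / 2))
        filter_upwards [this] with n h using h
      have hBd : Tendsto (fun n => B n * (d / 2)) atTop atTop :=
        hB.atTop_mul_const (by linarith)
      have hf : Tendsto (fun n => 1 / (1 + Real.exp (-(B n) * (t - u + ε n)))) atTop (𝓝 1) := by
        apply sig_one
        have hBd' : Tendsto (fun n => -(B n * (d / 2))) atTop atBot :=
          tendsto_neg_atBot_iff.mpr hBd
        apply tendsto_atBot_mono' atTop _ hBd'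
        filter_upwards [hB.eventually_ge_atTop 0] with n h2'
        have := hε_pos n
        nlinarith
      have hg : Tendsto (fun n => 1 / (1 + Real.exp (B n * (t - u - ε n)))) atTop (𝓝 0) := by
        apply sig_zero
        apply tendsto_atTop_mono' atTop _ hBd
        filter_upwards [hεd, hB.eventually_ge_atTop 0] with n h1' h2'
        have := hε_pos n
        nlinarith
      have := comp_lim otimes hcont h1 h0 hfm hgm hf hg
      rwa [h10] at this
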